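/- The function g(x) = log((2 + 1/cos(x))/(2 + cos(x))) / log(1/cos(x)) is strictly increasing on (0, π/2), with range (2/3, 1). -/

import Mathlib

open Real Set Filter Topology

noncomputable def psi : ℝ → ℝ := fun c => (Real.log (2+c) - Real.log (1+2*c)) / Real.log c

lemma keyIneq {c : ℝ} (hc : c ∈ Ioo (0:ℝ) 1) :
    0 < Real.log (2+c) - Real.log (1+2*c) + 3*c*Real.log c/((2+c)*(1+2*c)) := by
  obtain ⟨hc0, hc1⟩ := hc
  set f : ℝ → ℝ := fun c => Real.log (2+c) - Real.log (1+2*c) + 3*c*Real.log c/((2+c)*(1+2*c))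
    with hf
  have hderiv : ∀ x ∈ Ioo (0:ℝ) 1, HasDerivAt f
      ((1/(2+x) - 2/(1+2*x)) +
        ((3*Real.log x + 3)*((2+x)*(1+2*x)) - 3*x*Real.log x*(4*x+5))/((2+x)*(1+2*x))^2) x := by
    intro x hx
    have hx0 := hx.1
    have h2x : (2:ℝ)+x ≠ 0 := by linarith [hx.1]
    have h12x : (1:ℝ)+2*x ≠ 0 := by linarith [hx.1]
    have hPne : ((2:ℝ)+x)*(1+2*x) ≠ 0 := mul_ne_zero h2x h12x
    have h1 : HasDerivAt (fun y : ℝ => Real.log (2+y)) (1/(2+x)) x := by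
      simpa using (((hasDerivAt_id x).const_add 2).log h2x)
    have h2 : HasDerivAt (fun y : ℝ => Real.log (1+2*y)) (2/(1+2*x)) x := by
      have := (((hasDerivAt_id x).const_mul 2).const_add 1).log h12x
      simpa using this
    have h3 : HasDerivAt (fun y : ℝ => 3*y*Real.log y) (3*Real.log x + 3) x := by
      have := ((hasDerivAt_id x).const_mul 3).mul (Real.hasDerivAt_log (ne_of_gt hx0))
      refine this.congr_deriv ?_
      simp only [id_eq]
      field_simp
    have h4 : HasDerivAt (fun y : ℝ => (2+y)*(1+2*y)) (4*x+5) x := by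
      have := ((hasDerivAt_id x).const_add 2).mul (((hasDerivAt_id x).const_mul 2).const_add 1)
      refine this.congr_deriv ?_
      simp only [id_eq]
      ring
    exact (h1.sub h2).add (h3.div h4 hPne)
  have hcont : ContinuousOn f (Ioc (0:ℝ) 1) := by
    apply ContinuousOn.add
    · apply ContinuousOn.sub
      · exact (continuousOn_const.add continuousOn_id).log (fun x hx => ne_of_gt (by simp only [Pi.add_apply, Pi.mul_apply, id_eq]; linarith [hx.1]))
      · exact (continuousOn_const.add (continuousOn_const.mul continuousOn_id)).log
          (fun x hx => ne_of_gt (by simp only [Pi.add_apply, Pi.mul_apply, id_eq]; linarith [hx.1]))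
    · apply ContinuousOn.div
      · exact ((continuousOn_const.mul continuousOn_id).mul
          (Real.continuousOn_log.mono (fun x hx => ne_of_gt hx.1)))
      · exact (continuousOn_const.add continuousOn_id).mul
          (continuousOn_const.add (continuousOn_const.mul continuousOn_id))
      · intro x hx
        have := hx.1
        positivity
  have hanti : StrictAntiOn f (Ioc (0:ℝ) 1) := by
    apply strictAntiOn_of_deriv_neg (convex_Ioc 0 1) hcont
    intro x hx
    rw [interior_Ioc] at hx
    rw [(hderiv x hx).deriv]
    have hx0 := hx.1
    have hx1 := hx.2
    have hlog : Real.log x < 0 := Real.log_neg hx0 hx1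
    have hP : (0:ℝ) < (2+x)*(1+2*x) := by nlinarith
    have key : (1/(2+x) - 2/(1+2*x)) +
        ((3*Real.log x + 3)*((2+x)*(1+2*x)) - 3*x*Real.log x*(4*x+5))/((2+x)*(1+2*x))^2
        = 6*Real.log x*(1-x^2)/((2+x)*(1+2*x))^2 := by
      have h2x : (2:ℝ)+x ≠ 0 := by linarith
      have h12x : (1:ℝ)+2*x ≠ 0 := by linarith
      field_simp
      ring
    rw [key]
    apply div_neg_of_neg_of_pos
    · have h1 : (0:ℝ) < 1 - x^2 := by nlinarith
      have h2 : 6*Real.log x < 0 := by linarith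
      exact mul_neg_of_neg_of_pos h2 h1
    · positivity
  have hf1 : f 1 = 0 := by
    norm_num [hf, Real.log_one]
  have := hanti ⟨hc0, le_of_lt hc1⟩ ⟨one_pos, le_refl 1⟩ hc1
  rw [hf1] at this
  exact this

lemma log_ne {c : ℝ} (hc : c ∈ Ioo (0:ℝ) 1) : Real.log c ≠ 0 :=
  (Real.log_neg hc.1 hc.2).ne

lemma psi_hasDerivAt {c : ℝ} (hc : c ∈ Ioo (0:ℝ) 1) :
    HasDerivAt psi
      (((1/(2+c) - 2/(1+2*c)) * Real.log c -
        (Real.log (2+c) - Real.log (1+2*c)) * c⁻¹) / (Real.log c)^2) c := by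
  have h2x : (2:ℝ)+c ≠ 0 := by linarith [hc.1]
  have h12x : (1:ℝ)+2*c ≠ 0 := by linarith [hc.1]
  have h1 : HasDerivAt (fun y : ℝ => Real.log (2+y)) (1/(2+c)) c := by
    simpa using (((hasDerivAt_id c).const_add 2).log h2x)
  have h2 : HasDerivAt (fun y : ℝ => Real.log (1+2*y)) (2/(1+2*c)) c := by
    have := (((hasDerivAt_id c).const_mul 2).const_add 1).log h12x
    simpa using this
  exact (h1.sub h2).div (Real.hasDerivAt_log (ne_of_gt hc.1)) (log_ne hc)

lemma psi_anti : StrictAntiOn psi (Ioo (0:ℝ) 1) := by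
  apply strictAntiOn_of_deriv_neg (convex_Ioo 0 1)
  · apply ContinuousOn.div
    · exact ((continuousOn_const.add continuousOn_id).log
          (fun x hx => ne_of_gt (by simp only [Pi.add_apply, Pi.mul_apply, id_eq]; linarith [hx.1]))).sub
        ((continuousOn_const.add (continuousOn_const.mul continuousOn_id)).log
          (fun x hx => ne_of_gt (by simp only [Pi.add_apply, Pi.mul_apply, id_eq]; linarith [hx.1])))
    · exact Real.continuousOn_log.mono (fun x hx => ne_of_gt hx.1)
    · exact fun x hx => log_ne hx
  · intro c hc
    rw [interior_Ioo] at hc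
    rw [(psi_hasDerivAt hc).deriv]
    obtain ⟨hc0, hc1⟩ := hc
    have h2x : (2:ℝ)+c ≠ 0 := by linarith
    have h12x : (1:ℝ)+2*c ≠ 0 := by linarith
    have hkey := keyIneq ⟨hc0, hc1⟩
    have hnum : (1/(2+c) - 2/(1+2*c)) * Real.log c -
        (Real.log (2+c) - Real.log (1+2*c)) * c⁻¹
        = -((Real.log (2+c) - Real.log (1+2*c) +
            3*c*Real.log c/((2+c)*(1+2*c)))/c) := by
      field_simp
      ring
    rw [hnum]
    apply div_neg_of_neg_of_pos
    · rw [neg_neg_iff_pos.symm.symm]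
      have : 0 < (Real.log (2+c) - Real.log (1+2*c) +
          3*c*Real.log c/((2+c)*(1+2*c)))/c := div_pos hkey hc0
      linarith
    · exact pow_two_pos_of_ne_zero (log_ne ⟨hc0, hc1⟩)

lemma psi_bounds {c : ℝ} (hc : c ∈ Ioo (0:ℝ) 1) : psi c ∈ Ioo (-(1/3) : ℝ) 0 := by
  obtain ⟨hc0, hc1⟩ := hc
  have hl : Real.log c < 0 := Real.log_neg hc0 hc1
  have hu : 0 < Real.log (2+c) - Real.log (1+2*c) := by
    have := Real.log_lt_log (by linarith) (show (1:ℝ)+2*c < 2+c by linarith)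
    linarith
  constructor
  · rw [psi, lt_div_iff_of_neg hl]
    have hpoly : c*(2+c)^3 < (1+2*c)^3 := by
      have h : (1+2*c)^3 - c*(2+c)^3 = (1-c)^3*(1+c) := by ring
      nlinarith [pow_pos (show (0:ℝ) < 1-c by linarith) 3]
    have hlog3 : Real.log (c*(2+c)^3) < Real.log ((1+2*c)^3) :=
      Real.log_lt_log (by positivity) hpoly
    rw [Real.log_mul (ne_of_gt hc0) (by positivity), Real.log_pow, Real.log_pow] at hlog3
    push_cast at hlog3
    linarith
  · exact div_neg_of_pos_of_neg hu hl

lemma psi_tendsto_one : Tendsto psi (nhdsWithin 1 (Ioo (0:ℝ) 1)) (nhds (-(1/3) : ℝ)) := by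
  have h2x : (2:ℝ)+1 ≠ 0 := by norm_num
  have h12x : (1:ℝ)+2*1 ≠ 0 := by norm_num
  set U : ℝ → ℝ := fun c => Real.log (2+c) - Real.log (1+2*c) with hU
  have hU1 : U 1 = 0 := by norm_num [hU]
  have hL1 : Real.log 1 = 0 := Real.log_one
  have hdU : HasDerivAt U (-(1/3)) 1 := by
    have h1 : HasDerivAt (fun y : ℝ => Real.log (2+y)) (1/(2+1)) 1 := by
      simpa using (((hasDerivAt_id (1:ℝ)).const_add 2).log h2x)
    have h2 : HasDerivAt (fun y : ℝ => Real.log (1+2*y)) (2/(1+2*1)) 1 := by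
      have := (((hasDerivAt_id (1:ℝ)).const_mul 2).const_add 1).log h12x
      simpa using this
    have := h1.sub h2
    refine this.congr_deriv ?_
    norm_num
  have hdL : HasDerivAt Real.log 1 1 := by
    simpa using Real.hasDerivAt_log one_ne_zero
  have hsU := hasDerivAt_iff_tendsto_slope.mp hdU
  have hsL := hasDerivAt_iff_tendsto_slope.mp hdL
  have hdiv : Tendsto (fun c => slope U 1 c / slope Real.log 1 c)
      (nhdsWithin 1 {(1:ℝ)}ᶜ) (nhds (-(1/3) : ℝ)) := by
    have := hsU.div hsL one_ne_zero
    rw [div_one] at this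
    exact this
  have hmono : nhdsWithin 1 (Ioo (0:ℝ) 1) ≤ nhdsWithin 1 {(1:ℝ)}ᶜ :=
    nhdsWithin_mono 1 (fun x hx => ne_of_lt hx.2)
  refine Tendsto.congr' ?_ (hdiv.mono_left hmono)
  filter_upwards [self_mem_nhdsWithin] with c hc
  have hc1 : c - 1 ≠ 0 := by
    have := hc.2; intro h; apply absurd this; push_neg; nlinarith
  rw [slope_def_field, slope_def_field, hU1, hL1, sub_zero, sub_zero,
    div_div_div_cancel_right₀]
  · rfl
  · exact hc1

lemma cos_mem_Ioo {x : ℝ} (hx : x ∈ Ioo 0 (π/2)) : Real.cos x ∈ Ioo (0:ℝ) 1 := by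
  have hπ := Real.pi_pos
  constructor
  · exact Real.cos_pos_of_mem_Ioo ⟨by linarith [hx.1], hx.2⟩
  · have := Real.strictAntiOn_cos (show (0:ℝ) ∈ Icc 0 π from ⟨le_refl 0, by linarith⟩)
      ⟨hx.1.le, by linarith [hx.2]⟩ hx.1
    simpa using this

lemma cos_tendsto_zero : Tendsto Real.cos (nhdsWithin 0 (Ioo 0 (π/2)))
    (nhdsWithin 1 (Ioo (0:ℝ) 1)) := by
  apply tendsto_nhdsWithin_of_tendsto_nhds_of_eventually_within
  · have := Real.continuous_cos.tendsto 0
    rw [Real.cos_zero] at this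
    exact this.mono_left nhdsWithin_le_nhds
  · filter_upwards [self_mem_nhdsWithin] with x hx
    exact cos_mem_Ioo hx

lemma psi_cos_tendsto_pi : Tendsto (fun x => psi (Real.cos x))
    (nhdsWithin (π/2) (Ioo 0 (π/2))) (nhds (0:ℝ)) := by
  have hcos : Tendsto Real.cos (nhdsWithin (π/2) (Ioo 0 (π/2))) (nhdsWithin 0 (Ioi (0:ℝ))) := by
    apply tendsto_nhdsWithin_of_tendsto_nhds_of_eventually_within
    · have := Real.continuous_cos.tendsto (π/2)
      rw [Real.cos_pi_div_two] at this
      exact this.mono_left nhdsWithin_le_nhds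
    · filter_upwards [self_mem_nhdsWithin] with x hx
      exact (cos_mem_Ioo hx).1
  have hden : Tendsto (fun x => Real.log (Real.cos x))
      (nhdsWithin (π/2) (Ioo 0 (π/2))) atBot :=
    Real.tendsto_log_nhdsGT_zero.comp hcos
  have hnum : Tendsto (fun x => Real.log (2 + Real.cos x) - Real.log (1 + 2*Real.cos x))
      (nhdsWithin (π/2) (Ioo 0 (π/2))) (nhds (Real.log 2 - Real.log 1)) := by
    have c1 : ContinuousAt (fun x => Real.log (2 + Real.cos x)) (π/2) := by
      apply ContinuousAt.comp (Real.continuousAt_log ?_) (by fun_prop)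
      simp [Real.cos_pi_div_two]
    have c2 : ContinuousAt (fun x => Real.log (1 + 2*Real.cos x)) (π/2) := by
      apply ContinuousAt.comp (Real.continuousAt_log ?_) (by fun_prop)
      simp [Real.cos_pi_div_two]
    have := (c1.sub c2).tendsto
    simp only [Pi.sub_apply, Real.cos_pi_div_two] at this
    norm_num at this
    norm_num
    exact this.mono_left nhdsWithin_le_nhds
  have hnegden : Tendsto (fun x => -Real.log (Real.cos x))
      (nhdsWithin (π/2) (Ioo 0 (π/2))) atTop := tendsto_neg_atBot_atTop.comp hden
  have hq := hnum.div_atTop hnegden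
  have : (fun x => -((Real.log (2 + Real.cos x) - Real.log (1 + 2*Real.cos x)) /
      (-Real.log (Real.cos x)))) = fun x => psi (Real.cos x) := by
    funext x
    rw [psi]
    rw [div_neg, neg_neg]
  rw [← this]
  have := hq.neg
  rw [neg_zero] at this
  exact this

lemma gEq : EqOn (fun x : ℝ =>
    Real.log ((2 + 1 / Real.cos x) / (2 + Real.cos x)) / Real.log (1 / Real.cos x))
    (fun x => 1 + psi (Real.cos x)) (Ioo 0 (π/2)) := by
  intro x hx
  obtain ⟨hc0, hc1⟩ := cos_mem_Ioo hx
  have hlog : Real.log (Real.cos x) < 0 := Real.log_neg hc0 hc1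
  have h2c : (2:ℝ) + Real.cos x ≠ 0 := by linarith
  have h12c : (1:ℝ) + 2*Real.cos x ≠ 0 := by linarith
  have h1 : (2:ℝ) + 1 / Real.cos x = (1 + 2*Real.cos x) / Real.cos x := by
    field_simp; ring
  show Real.log ((2 + 1 / Real.cos x) / (2 + Real.cos x)) / Real.log (1 / Real.cos x)
    = 1 + psi (Real.cos x)
  rw [h1, one_div, Real.log_inv, div_div, Real.log_div (by positivity) (mul_ne_zero
    (ne_of_gt hc0) h2c), Real.log_mul (ne_of_gt hc0) h2c, psi]
  have hln : Real.log (Real.cos x) ≠ 0 := hlog.ne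
  rw [show Real.log (1+2*Real.cos x) - (Real.log (Real.cos x) + Real.log (2+Real.cos x))
      = -(Real.log (Real.cos x) + (Real.log (2+Real.cos x) - Real.log (1+2*Real.cos x))) from
    by ring, neg_div_neg_eq, add_div, div_self hln]

theorem sandor_g_mono :
    StrictMonoOn (fun x : ℝ =>
        log ((2 + 1 / cos x) / (2 + cos x)) / log (1 / cos x)) (Ioo 0 (π/2)) ∧
    (fun x : ℝ =>
        log ((2 + 1 / cos x) / (2 + cos x)) / log (1 / cos x)) '' Ioo 0 (π/2) =
      Ioo (2/3) 1 := by
  have hπ := Real.pi_pos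
  set G : ℝ → ℝ := fun x => 1 + psi (Real.cos x) with hG
  have hmono : StrictMonoOn G (Ioo 0 (π/2)) := by
    intro x hx y hy hxy
    apply add_lt_add_right
    have hcxy : Real.cos y < Real.cos x :=
      Real.strictAntiOn_cos ⟨hx.1.le, by linarith [hx.2]⟩ ⟨hy.1.le, by linarith [hy.2]⟩ hxy
    exact psi_anti (cos_mem_Ioo hy) (cos_mem_Ioo hx) hcxy
  have hcontG : ContinuousOn G (Ioo 0 (π/2)) := by
    apply continuousOn_const.add
    have hψ : ContinuousOn psi (Ioo (0:ℝ) 1) := by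
      apply ContinuousOn.div
      · exact ((continuousOn_const.add continuousOn_id).log
            (fun x hx => ne_of_gt (by simp only [Pi.add_apply, Pi.mul_apply, id_eq]; linarith [hx.1]))).sub
          ((continuousOn_const.add (continuousOn_const.mul continuousOn_id)).log
            (fun x hx => ne_of_gt (by simp only [Pi.add_apply, Pi.mul_apply, id_eq]; linarith [hx.1])))
      · exact Real.continuousOn_log.mono (fun x hx => ne_of_gt hx.1)
      · exact fun x hx => log_ne hx
    exact hψ.comp Real.continuous_cos.continuousOn (fun x hx => cos_mem_Ioo hx)
  constructor
  · exact hmono.congr (fun x hx => (gEq hx).symm)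
  · rw [Set.image_congr gEq]
    ext y
    constructor
    · rintro ⟨x, hx, rfl⟩
      have hb := psi_bounds (cos_mem_Ioo hx)
      exact ⟨by simpa using (by linarith [hb.1] : (2:ℝ)/3 < 1 + psi (Real.cos x)),
        by simpa using (by linarith [hb.2] : (1:ℝ) + psi (Real.cos x) < 1)⟩
    · rintro ⟨hy1, hy2⟩
      have hne0 : (nhdsWithin 0 (Ioo 0 (π/2))).NeBot := by
        apply mem_closure_iff_nhdsWithin_neBot.mp
        rw [closure_Ioo (by linarith : (0:ℝ) ≠ π/2)]
        exact ⟨le_refl 0, by linarith⟩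
      have hneπ : (nhdsWithin (π/2) (Ioo 0 (π/2))).NeBot := by
        apply mem_closure_iff_nhdsWithin_neBot.mp
        rw [closure_Ioo (by linarith : (0:ℝ) ≠ π/2)]
        exact ⟨by linarith, le_refl _⟩
      have ha : Tendsto G (nhdsWithin 0 (Ioo 0 (π/2))) (nhds (2/3 : ℝ)) := by
        have := (psi_tendsto_one.comp cos_tendsto_zero).const_add 1
        have h23 : (1:ℝ) + -(1/3) = 2/3 := by norm_num
        rw [h23] at this
        exact this
      have hb : Tendsto G (nhdsWithin (π/2) (Ioo 0 (π/2))) (nhds (1 : ℝ)) := by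
        have := psi_cos_tendsto_pi.const_add 1
        rw [add_zero] at this
        exact this
      obtain ⟨a, hga, haS⟩ := ((ha.eventually_lt_const hy1).and eventually_mem_nhdsWithin).exists
      obtain ⟨b, hgb, hbS⟩ := ((hb.eventually_const_lt hy2).and eventually_mem_nhdsWithin).exists
      have hab : a < b := by
        rcases lt_or_ge a b with h | h
        · exact h
        · exfalso
          have := hmono.monotoneOn hbS haS h
          linarith
      have hsub : Icc a b ⊆ Ioo 0 (π/2) :=
        fun z hz => ⟨lt_of_lt_of_le haS.1 hz.1, lt_of_le_of_lt hz.2 hbS.2⟩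
      have := intermediate_value_Icc hab.le (hcontG.mono hsub)
      obtain ⟨x, hxab, hxy⟩ := this ⟨hga.le, hgb.le⟩
      exact ⟨x, hsub hxab, hxy⟩
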